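/- Let f be a Boolean network of dimension n and ⟨f⟩ its interval-semantics encoding. For every i ∈ {1,…,n}: (2i−1, 2i−1) is a positive edge (positive self-loop) of G(⟨f⟩) if and only if there exists x ∈ 𝔹^n such that f_i(x) = x_i. -/
import Mathlib


/-- Asynchronous transition relation of a Boolean network `f`:
`x → y` iff exactly one component `i` differs and `y i = f i x`. -/
def asyncStep {ι : Type} (f : ι → (ι → Bool) → Bool) (x y : ι → Bool) : Prop :=
  ∃ i : ι, x i ≠ y i ∧ (∀ j : ι, j ≠ i → x j = y j) ∧ y i = f i x

/-- Index of the "write" node `2i-1` (0-indexed: `2i`). -/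
def wIdx {n : ℕ} (i : Fin n) : Fin (2 * n) := ⟨2 * i.val, by have := i.isLt; omega⟩

/-- Index of the "read" node `2i` (0-indexed: `2i+1`). -/
def rIdx {n : ℕ} (i : Fin n) : Fin (2 * n) := ⟨2 * i.val + 1, by have := i.isLt; omega⟩

/-- `γ : 𝔹^{2n} → 𝔹^n`, projection on read nodes. -/
def gam {n : ℕ} (z : Fin (2 * n) → Bool) : Fin n → Bool := fun i => z (rIdx i)

/-- `α : 𝔹^n → 𝔹^{2n}`, consistent configuration. -/
def alph {n : ℕ} (x : Fin n → Bool) : Fin (2 * n) → Bool :=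
  fun k => x ⟨k.val / 2, by have := k.isLt; omega⟩

/-- Interval-semantics encoding `⟨f⟩` of a Boolean network `f`. -/
def encode {n : ℕ} (f : Fin n → (Fin n → Bool) → Bool) :
    Fin (2 * n) → (Fin (2 * n) → Bool) → Bool := fun k z =>
  let i : Fin n := ⟨k.val / 2, by have := k.isLt; omega⟩
  if k.val % 2 = 0 then
    (f i (gam z) && (!(z (rIdx i)) || z (wIdx i))) || (!(z (rIdx i)) && z (wIdx i))
  else
    z (wIdx i)

/-- Positive edge `(j,i)` of the influence graph `G(f)`. -/
def posEdge {ι : Type} (f : ι → (ι → Bool) → Bool) (j i : ι) : Prop :=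
  ∃ x y : ι → Bool, (∀ k : ι, k ≠ j → x k = y k) ∧ x j = false ∧ y j = true ∧
    f i x = false ∧ f i y = true

/-- Negative edge `(j,i)` of the influence graph `G(f)`. -/
def negEdge {ι : Type} (f : ι → (ι → Bool) → Bool) (j i : ι) : Prop :=
  ∃ x y : ι → Bool, (∀ k : ι, k ≠ j → x k = y k) ∧ x j = false ∧ y j = true ∧
    f i x = true ∧ f i y = false

/-- `(2i−1, 2i−1)` is a positive self-loop of `G(⟨f⟩)` iff
there exists `x` with `f_i(x) = x_i`. -/
theorem pos_selfloop_iff {n : ℕ} (f : Fin n → (Fin n → Bool) → Bool) (i : Fin n) :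
    posEdge (encode f) (wIdx i) (wIdx i) ↔ ∃ x : Fin n → Bool, f i x = x i := by
  have hwr : wIdx i ≠ rIdx i := by
    simp [wIdx, rIdx, Fin.ext_iff]
  have henc : ∀ z : Fin (2 * n) → Bool,
      encode f (wIdx i) z =
        ((f i (gam z) && (!(z (rIdx i)) || z (wIdx i))) || (!(z (rIdx i)) && z (wIdx i))) := by
    intro z
    have h1 : (wIdx i).val % 2 = 0 := by simp [wIdx, Nat.mul_mod_right]
    have h2 : (⟨(wIdx i).val / 2, by have := (wIdx i).isLt; omega⟩ : Fin n) = i := by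
      simp [wIdx, Fin.ext_iff, Nat.mul_div_cancel_left _ (by norm_num : 0 < 2)]
    simp only [encode, h1, if_pos]
    rw [h2]
  constructor
  · rintro ⟨z0, z1, hagree, hz0, hz1, hf0, hf1⟩
    refine ⟨gam z0, ?_⟩
    have hgam : gam z0 = gam z1 := by
      funext j
      exact hagree (rIdx j) (by simp [wIdx, rIdx, Fin.ext_iff]; omega)
    have hr : z0 (rIdx i) = z1 (rIdx i) := hagree _ (Ne.symm hwr)
    rw [henc z0, hz0] at hf0
    rw [henc z1, hz1, ← hgam, ← hr] at hf1
    have : (gam z0) i = z0 (rIdx i) := rfl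
    rw [this]
    cases h : z0 (rIdx i) <;> rw [h] at hf0 hf1 <;> simp_all
  · rintro ⟨x, hx⟩
    have hg : ∀ b : Bool, gam (Function.update (alph x) (wIdx i) b) = x := by
      intro b
      funext j
      have : rIdx j ≠ wIdx i := by simp [wIdx, rIdx, Fin.ext_iff]; omega
      rw [gam, Function.update_of_ne this]
      simp only [alph, rIdx]
      congr 1
      exact Fin.ext (by simp; omega)
    refine ⟨Function.update (alph x) (wIdx i) false,
            Function.update (alph x) (wIdx i) true, ?_, by simp, by simp, ?_, ?_⟩
    · intro k hk; simp [Function.update_of_ne hk]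
    all_goals {
      rw [henc]
      have hrr : (rIdx i) ≠ wIdx i := Ne.symm hwr
      have halr : alph x (rIdx i) = x i := by
        simp only [alph, rIdx]
        congr 1
        exact Fin.ext (by simp; omega)
      rw [hg, Function.update_of_ne hrr, Function.update_self, halr, hx]
      cases x i <;> rfl
    }
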